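/- For n odd, the multiset of f-values of odd words of rank n+1 equals the multiset union of the f-values of odd words of rank n and (n+1) times those f-values; i.e., {f_w : w odd of rank n+1} = {f_v : v odd of rank n} ⊔ {(n+1)·f_v : v odd of rank n} as multisets. -/
import Mathlib


/-- The list of words covered by `w` in the Young-Fibonacci lattice. -/
def preds : List ℕ → List (List ℕ)
  | [] => []
  | 1 :: t => [t]
  | 2 :: t => (1 :: t) :: (preds t).map (fun u => 2 :: u)
  | _ :: _ => []

theorem preds_sum_lt : ∀ (w u : List ℕ), u ∈ preds w → u.sum < w.sum := by
  intro w
  induction w using preds.induct with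
  | case1 => intro u h; simp [preds] at h
  | case2 t => intro u h; simp [preds] at h; subst h; simp
  | case3 t ih =>
      intro u h
      simp [preds] at h
      rcases h with h | ⟨v, hv, rfl⟩
      · subst h; simp
      · have := ih v hv; simpa using by omega
  | case4 x t h1 h2 => intro u h; simp [preds] at h

/-- The number of saturated chains from the empty word to `w`. -/
def f (w : List ℕ) : ℕ :=
  if w = [] then 1
  else ((preds w).attach.map (fun u => f u.1)).sum
termination_by w.sum
decreasing_by exact preds_sum_lt w u.1 u.2

/-- The product formula. -/
def fprod (w : List ℕ) : ℕ :=
  ∏ i ∈ Finset.univ.filter (fun i : Fin w.length => w.get i = 2), ((w.drop i.1).sum - 1)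

lemma fprod_cons (a : ℕ) (t : List ℕ) :
    fprod (a :: t) = (if a = 2 then (a :: t).sum - 1 else 1) * fprod t := by
  unfold fprod
  rw [Finset.prod_filter, Finset.prod_filter]
  simp only [List.length_cons]
  rw [Fin.prod_univ_succ]
  simp [List.get_cons_succ]

lemma fprod_one_cons (t : List ℕ) : fprod (1 :: t) = fprod t := by
  simp [fprod_cons]

lemma fprod_two_cons (t : List ℕ) : fprod (2 :: t) = (t.sum + 1) * fprod t := by
  rw [fprod_cons, if_pos rfl, List.sum_cons]
  congr 1
  omega

lemma head_one {n : ℕ} (hn : Odd n) {v : List ℕ} (h1 : ∀ x ∈ v, x = 1 ∨ x = 2)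
    (h2 : v.sum = n) (h3 : Odd (fprod v)) : ∃ t, v = 1 :: t := by
  cases v with
  | nil => exfalso; rcases hn with ⟨k, hk⟩; simp at h2; omega
  | cons a t =>
    rcases h1 a (by simp) with rfl | rfl
    · exact ⟨t, rfl⟩
    · exfalso
      rw [fprod_two_cons] at h3
      have : t.sum + 1 = n - 1 := by simp at h2; omega
      rw [this] at h3
      rcases hn with ⟨k, rfl⟩
      have : 2*k+1-1 = 2*k := by omega
      rw [this] at h3
      exact (Nat.not_odd_iff_even.mpr ((even_two_mul k).mul_right _)) h3

/-- for `n` odd, the multiset of `f`-values of odd words of rank `n+1`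
is the union of the `f`-values of the odd words of rank `n` and `n` times those
values. -/
theorem fvalues_step_odd (n : ℕ) (hn : Odd n) (L L' : Finset (List ℕ))
    (hL : ∀ w : List ℕ, w ∈ L ↔ (∀ x ∈ w, x = 1 ∨ x = 2) ∧ w.sum = n ∧ Odd (fprod w))
    (hL' : ∀ w : List ℕ, w ∈ L' ↔ (∀ x ∈ w, x = 1 ∨ x = 2) ∧ w.sum = n + 1 ∧ Odd (fprod w)) :
    L'.val.map fprod = L.val.map fprod + L.val.map (fun v => n * fprod v) := by
  have hhead : ∀ v ∈ L, ∃ t, v = 1 :: t := by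
    intro v hv; rcases (hL v).mp hv with ⟨a, b, c⟩; exact head_one hn a b c
  have hdisj : Disjoint (L.image (fun v => 1 :: v)) (L.image (fun v => 2 :: v.tail)) := by
    rw [Finset.disjoint_left]
    rintro w hw1 hw2
    rcases Finset.mem_image.mp hw1 with ⟨a, _, rfl⟩
    rcases Finset.mem_image.mp hw2 with ⟨b, _, hb⟩
    simp at hb
  have hL'eq : L' = (L.image (fun v => 1 :: v)).disjUnion (L.image (fun v => 2 :: v.tail)) hdisj := by
    ext w
    rw [hL' w, Finset.mem_disjUnion, Finset.mem_image, Finset.mem_image]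
    constructor
    · rintro ⟨h1, h2, h3⟩
      match w, h2 with
      | a :: t, h2 =>
      rcases h1 a (by simp) with rfl | rfl
      · left
        refine ⟨t, (hL t).mpr ⟨fun x hx => h1 x (by simp [hx]), ?_, ?_⟩, rfl⟩
        · simp at h2; omega
        · rwa [fprod_one_cons] at h3
      · right
        refine ⟨1 :: t, (hL (1 :: t)).mpr ⟨?_, ?_, ?_⟩, rfl⟩
        · intro x hx; rcases List.mem_cons.mp hx with rfl | hx
          · left; rfl
          · exact h1 x (by simp [hx])
        · simp at h2 ⊢; omega
        · rw [fprod_two_cons] at h3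
          rw [fprod_one_cons]
          exact (Nat.odd_mul.mp h3).2
    · rintro (⟨v, hv, rfl⟩ | ⟨v, hv, rfl⟩)
      · rcases (hL v).mp hv with ⟨h1, h2, h3⟩
        refine ⟨?_, by simp [h2]; omega, by rwa [fprod_one_cons]⟩
        intro x hx; rcases List.mem_cons.mp hx with rfl | hx
        · left; rfl
        · exact h1 x hx
      · rcases (hL v).mp hv with ⟨h1, h2, h3⟩
        rcases hhead v hv with ⟨t, rfl⟩
        simp only [List.tail_cons]
        refine ⟨?_, ?_, ?_⟩
        · intro x hx; rcases List.mem_cons.mp hx with rfl | hx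
          · right; rfl
          · exact h1 x (by simp [hx])
        · simp at h2 ⊢; omega
        · rw [fprod_two_cons]
          rw [fprod_one_cons] at h3
          have ht : t.sum + 1 = n := by simp at h2; omega
          rw [ht]
          exact hn.mul h3
  rw [hL'eq]
  rw [show ((L.image (fun v => 1 :: v)).disjUnion (L.image (fun v => 2 :: v.tail)) hdisj).val = (L.image (fun v => 1 :: v)).val + (L.image (fun v => 2 :: v.tail)).val from rfl, Multiset.map_add]
  congr 1
  · rw [Finset.image_val_of_injOn (fun a _ b _ h => by simpa using h), Multiset.map_map]
    exact Multiset.map_congr rfl (fun v hv => fprod_one_cons v)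
  · rw [Finset.image_val_of_injOn, Multiset.map_map]
    · refine Multiset.map_congr rfl (fun v hv => ?_)
      rcases hhead v hv with ⟨t, rfl⟩
      rcases (hL (1 :: t)).mp hv with ⟨h1, h2, h3⟩
      simp only [Function.comp, List.tail_cons, fprod_two_cons, fprod_one_cons]
      have ht : t.sum + 1 = n := by simp at h2; omega
      rw [ht]
    · intro a ha b hb h
      rcases hhead a ha with ⟨t, rfl⟩
      rcases hhead b hb with ⟨u, rfl⟩
      simpa using h
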